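/- Let G be a bipartite graph with parts A = {a_1,...,a_n} and B = {b_1,...,b_n}, and fix indices i, j ∈ {1,...,n}. Construct the graph H with vertex set A ∪ B ∪ {x_1,...,x_n} ∪ {y_1,...,y_n} and edges: all edges of G; all pairs within A ∪ {x_1,...,x_n} (making it a clique); the edges {x_r, y_{r'}} for all r ≠ r'; the edges {a_i, y_i}, {y_i, b_j}; and the edges {b_j, x_r} for all r ∈ {1,...,n}. Then H is a chordal graph if and only if {a_i, b_j} is an edge of G. -/

import Mathlib

/-- `G` contains an induced subgraph isomorphic to `H`. -/
def ContainsInduced {V : Type*} (G : SimpleGraph V) {n : ℕ}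
    (H : SimpleGraph (Fin n)) : Prop :=
  ∃ f : Fin n ↪ V, ∀ a b, H.Adj a b ↔ G.Adj (f a) (f b)

/-- A graph is chordal iff it has no induced cycle of length at least 4. -/
def Chordal {V : Type*} (G : SimpleGraph V) : Prop :=
  ∀ n : ℕ, 4 ≤ n → ¬ ContainsInduced G (SimpleGraph.cycleGraph n)

/-- Vertices of the lower-bound construction: `A`, `B` (the two sides of the bipartite
graph `G`), and the new vertices `X = {x_1,…,x_n}` and `Y = {y_1,…,y_n}`. -/
inductive Vtx (n : ℕ) where
  | A : Fin n → Vtx n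
  | B : Fin n → Vtx n
  | X : Fin n → Vtx n
  | Y : Fin n → Vtx n

/-- The edge relation of the graph `H` built from the bipartite graph `G` (given by its
adjacency relation `E` between the two sides) and the indices `i, j`: all edges of `G`;
`A ∪ X` is a clique; edges `{x_r, y_{r'}}` for `r ≠ r'`; edges `{a_i, y_i}` and
`{y_i, b_j}`; and edges `{b_j, x_r}` for all `r`. -/
def hRel (n : ℕ) (E : Fin n → Fin n → Prop) (i j : Fin n) :
    Vtx n → Vtx n → Prop := fun u v =>
  match u, v with
  | .A _, .A _ => True
  | .A _, .X _ => True
  | .X _, .X _ => True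
  | .A p, .B q => E p q
  | .X p, .Y q => p ≠ q
  | .A p, .Y q => p = i ∧ q = i
  | .Y p, .B q => p = i ∧ q = j
  | .B p, .X _ => p = j
  | _, _ => False

open Fin.NatCast in
/-- The graph `H` of the lower-bound construction is chordal iff `{a_i, b_j}` is an
edge of the bipartite graph `G`. -/
lemma fin_cast_ne (m a b : ℕ) (ha : a < m+4) (hb : b < m+4) (hab : a ≠ b) :
    ((a : ℕ) : Fin (m+4)) ≠ ((b : ℕ) : Fin (m+4)) := by
  intro h
  have := congrArg Fin.val h
  rw [Fin.val_natCast, Fin.val_natCast, Nat.mod_eq_of_lt ha, Nat.mod_eq_of_lt hb] at this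
  exact hab this

/-- `A` and `X` vertices. -/
def isAX {n : ℕ} : Vtx n → Prop
  | .A _ => True
  | .X _ => True
  | _ => False


section Aux
variable {n : ℕ} {E : Fin n → Fin n → Prop} {i j : Fin n}

lemma isAX_adj {u v : Vtx n} (hne : u ≠ v) (hu : isAX u) (hv : isAX v) :
    (SimpleGraph.fromRel (hRel n E i j)).Adj u v := by
  rw [SimpleGraph.fromRel_adj]
  refine ⟨hne, ?_⟩
  cases u <;> cases v <;> simp_all [isAX, hRel]

lemma adj_Bj {z : Vtx n} (hE : E i j) (hz : z = Vtx.A i ∨ ∃ r, z = Vtx.X r) :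
    (SimpleGraph.fromRel (hRel n E i j)).Adj z (Vtx.B j) := by
  rcases hz with rfl | ⟨r, rfl⟩ <;> rw [SimpleGraph.fromRel_adj] <;> simp [hRel, hE]

lemma isAX_of (hz : ∀ z : Vtx n, True) {z : Vtx n} (h : z = Vtx.A i ∨ ∃ r, z = Vtx.X r) :
    isAX z := by
  rcases h with rfl | ⟨r, rfl⟩ <;> simp [isAX]

lemma classY {z : Vtx n} {q : Fin n}
    (hz : (SimpleGraph.fromRel (hRel n E i j)).Adj z (Vtx.Y q)) :
    (z = Vtx.A i ∨ ∃ r, z = Vtx.X r) ∨ z = Vtx.B j := by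
  rw [SimpleGraph.fromRel_adj] at hz
  obtain ⟨hne, h | h⟩ := hz
  · cases z <;> simp_all [hRel] <;> tauto
  · cases z <;> simp_all [hRel] <;> tauto

lemma classB {z : Vtx n} {q : Fin n}
    (hz : (SimpleGraph.fromRel (hRel n E i j)).Adj z (Vtx.B q))
    (hnY : ∀ r, z ≠ Vtx.Y r) : isAX z := by
  rw [SimpleGraph.fromRel_adj] at hz
  obtain ⟨hne, h | h⟩ := hz
  · cases z <;> simp_all [hRel, isAX]
  · cases z <;> simp_all [hRel, isAX]

lemma classNone {z : Vtx n} (hnY : ∀ r, z ≠ Vtx.Y r) (hnB : ∀ r, z ≠ Vtx.B r) :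
    isAX z := by
  cases z <;> simp_all [isAX]

end Aux

theorem stmt_17 (n : ℕ) (E : Fin n → Fin n → Prop) (i j : Fin n) :
    Chordal (SimpleGraph.fromRel (hRel n E i j)) ↔ E i j := by
  constructor
  · -- chordal → E i j
    intro hch
    by_contra hE
    apply hch 4 le_rfl
    refine ⟨⟨![Vtx.A i, Vtx.Y i, Vtx.B j, Vtx.X i], ?_⟩, ?_⟩
    · intro a b hab
      fin_cases a <;> fin_cases b <;> simp_all [Matrix.cons_val_zero, Matrix.cons_val_one]
    · intro a b
      fin_cases a <;> fin_cases b <;>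
        simp only [DFunLike.coe] <;>
        simp [SimpleGraph.fromRel_adj, hRel, hE, show (4:ℕ) = 2 + 2 from rfl,
          SimpleGraph.cycleGraph_adj] <;> decide
  · -- E i j → chordal
    intro hE m hm ⟨f, hf⟩
    obtain ⟨m, rfl⟩ : ∃ k, m = k + 4 := ⟨m - 4, by omega⟩
    have hinj : Function.Injective f := f.injective
    set G := SimpleGraph.fromRel (hRel n E i j) with hG
    have h2ne1 : (2 : Fin (m+4)) ≠ 1 := by
      simpa [Fin.ext_iff] using fin_cast_ne m 2 1 (by omega) (by omega) (by omega)
    have h2ne0 : (2 : Fin (m+4)) ≠ 0 := by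
      simpa [Fin.ext_iff] using fin_cast_ne m 2 0 (by omega) (by omega) (by omega)
    have h3ne0 : (3 : Fin (m+4)) ≠ 0 := by
      simpa [Fin.ext_iff] using fin_cast_ne m 3 0 (by omega) (by omega) (by omega)
    have hadjsub : ∀ c : Fin (m+4), (SimpleGraph.cycleGraph (m+4)).Adj (c-1) c := by
      intro c; rw [SimpleGraph.cycleGraph_adj]; right; open Fin.CommRing in ring
    have hadjadd : ∀ c : Fin (m+4), (SimpleGraph.cycleGraph (m+4)).Adj c (c+1) := by
      intro c; rw [SimpleGraph.cycleGraph_adj]; right; open Fin.CommRing in ring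
    have hnadj : ∀ c : Fin (m+4), ¬ (SimpleGraph.cycleGraph (m+4)).Adj (c-1) (c+1) := by
      intro c h
      rw [SimpleGraph.cycleGraph_adj] at h
      rcases h with h | h
      · exact h3ne0 (by open Fin.CommRing in linear_combination -h)
      · exact h2ne1 (by open Fin.CommRing in linear_combination h)
    have hne2 : ∀ c : Fin (m+4), c - 1 ≠ c + 1 := by
      intro c h
      exact h2ne0 (by open Fin.CommRing in linear_combination -h)
    have hAX : ∀ u v : Fin (m+4), u ≠ v → isAX (f u) → isAX (f v) →
        (SimpleGraph.cycleGraph (m+4)).Adj u v := by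
      intro u v huv hu hv
      rw [hf]
      exact isAX_adj (fun h => huv (hinj h)) hu hv
    by_cases hY : ∃ c q, f c = Vtx.Y q
    · obtain ⟨c, q, hc⟩ := hY
      have hu : G.Adj (f (c-1)) (Vtx.Y q) := hc ▸ (hf (c-1) c).1 (hadjsub c)
      have hw : G.Adj (Vtx.Y q) (f (c+1)) := hc ▸ (hf c (c+1)).1 (hadjadd c)
      have huw : ¬ G.Adj (f (c-1)) (f (c+1)) := fun h => hnadj c ((hf _ _).2 h)
      have hBadj : ∀ z : Vtx n, (z = Vtx.A i ∨ ∃ r, z = Vtx.X r) → G.Adj z (Vtx.B j) :=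
        fun z hz => adj_Bj hE hz
      have hisAX : ∀ z : Vtx n, (z = Vtx.A i ∨ ∃ r, z = Vtx.X r) → isAX z :=
        fun z hz => isAX_of (fun _ => trivial) hz
      have hclass : ∀ z : Vtx n, G.Adj z (Vtx.Y q) →
          (z = Vtx.A i ∨ ∃ r, z = Vtx.X r) ∨ z = Vtx.B j :=
        fun z hz => classY hz
      rcases hclass _ hu with h1 | h1
      · rcases hclass _ hw.symm with h2 | h2
        · exact huw ((hf _ _).1 (hAX _ _ (hne2 c) (hisAX _ h1) (hisAX _ h2)))
        · apply huw; rw [h2]; exact hBadj _ h1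
      · rcases hclass _ hw.symm with h2 | h2
        · apply huw; rw [h1]; exact (hBadj _ h2).symm
        · exact hne2 c (hinj (h1.trans h2.symm))
    · push_neg at hY
      by_cases hB : ∃ c q, f c = Vtx.B q
      · obtain ⟨c, q, hc⟩ := hB
        have hu : G.Adj (f (c-1)) (Vtx.B q) := hc ▸ (hf (c-1) c).1 (hadjsub c)
        have hw : G.Adj (Vtx.B q) (f (c+1)) := hc ▸ (hf c (c+1)).1 (hadjadd c)
        have h1 : isAX (f (c-1)) := classB hu (fun r h => hY _ r h)
        have h2 : isAX (f (c+1)) := classB hw.symm (fun r h => hY _ r h)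
        exact hnadj c (hAX _ _ (hne2 c) h1 h2)
      · push_neg at hB
        have h1 : ∀ u : Fin (m+4), isAX (f u) :=
          fun u => classNone (fun r h => hY u r h) (fun r h => hB u r h)
        exact hnadj 1 (hAX _ _ (hne2 1) (h1 _) (h1 _))
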